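/- (Decomposing characterization) Under the hypotheses of the composing/decomposing theorem, for a tuple (x_1,…,x_m) ∈ S with rule {x_j : j ∈ W_i} →_p x_i, the rule is decomposing with respect to ≺_p if and only if i ∈ D; in the decomposing case, the controlling value is x_h for the index h ∈ C guaranteed by the local collision free condition with h ∈ W_i and i ∈ W_h. -/
import Mathlib


variable {V : Type*} {m : ℕ}

def ImS (S : Set (Fin m → V)) (C : Set (Fin m)) : Set V :=
  {v | ∃ i ∈ C, ∃ x ∈ S, x i = v}

def Stage (S : Set (Fin m → V)) (C : Set (Fin m)) (W : Fin m → Set (Fin m)) :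
    ℕ → Set V
  | 0 => (ImS S C)ᶜ
  | n + 1 => Stage S C W n ∪
      {v | ∃ i ∈ C, ∃ x ∈ S, x i = v ∧ ∀ j ∈ W i, x j ∈ Stage S C W n}

def SInf (S : Set (Fin m → V)) (C : Set (Fin m)) (W : Fin m → Set (Fin m)) : Set V :=
  ⋃ n, Stage S C W n

def precS (S : Set (Fin m → V)) (C : Set (Fin m)) (W : Fin m → Set (Fin m))
    (v w : V) : Prop :=
  ∃ a b : ℕ, a < b ∧
    v ∈ Stage S C W a ∧ (∀ k < a, v ∉ Stage S C W k) ∧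
    w ∈ Stage S C W b ∧ (∀ k < b, w ∉ Stage S C W k)

/-- The rules of principal `p` arising from the locally collision free set `S`. -/
def ruleOf (S : Set (Fin m → V)) (C D : Set (Fin m)) (W : Fin m → Set (Fin m))
    (X : Set V) (v : V) : Prop :=
  ∃ i ∈ C ∪ D, ∃ x ∈ S, v = x i ∧ X = {u | ∃ j ∈ W i, x j = u}

/-- The rule `X → x` is decomposing: some `v ∈ X` with `x ≺ v` controls `x`, i.e.
`x` belongs to every composing rule producing `v`. -/
def decomposingRule (S : Set (Fin m → V)) (C D : Set (Fin m))
    (W : Fin m → Set (Fin m)) (X : Set V) (x : V) : Prop :=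
  ∃ v ∈ X, precS S C W x v ∧
    ∀ X' : Set V, ruleOf S C D W X' v → (∀ u ∈ X', precS S C W u v) → x ∈ X'

/-- `v controls x`. -/
def controls (S : Set (Fin m → V)) (C D : Set (Fin m)) (W : Fin m → Set (Fin m))
    (v x : V) : Prop :=
  precS S C W x v ∧
    ∀ X' : Set V, ruleOf S C D W X' v → (∀ u ∈ X', precS S C W u v) → x ∈ X'

lemma stage_mono (S : Set (Fin m → V)) (C : Set (Fin m)) (W : Fin m → Set (Fin m))
    {a b : ℕ} (hab : a ≤ b) : Stage S C W a ⊆ Stage S C W b := by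
  induction hab with
  | refl => exact subset_rfl
  | step h ih => exact ih.trans (by intro v hv; exact Or.inl hv)

lemma first_unique {S : Set (Fin m → V)} {C : Set (Fin m)} {W : Fin m → Set (Fin m)}
    {v : V} {a a' : ℕ}
    (h1 : v ∈ Stage S C W a) (h2 : ∀ k < a, v ∉ Stage S C W k)
    (h3 : v ∈ Stage S C W a') (h4 : ∀ k < a', v ∉ Stage S C W k) : a = a' := by
  rcases lt_trichotomy a a' with h | h | h
  · exact absurd h1 (h4 a h)
  · exact h
  · exact absurd h3 (h2 a' h)

lemma precS_asymm {S : Set (Fin m → V)} {C : Set (Fin m)} {W : Fin m → Set (Fin m)}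
    {v w : V} (h1 : precS S C W v w) (h2 : precS S C W w v) : False := by
  obtain ⟨a, b, hab, hva, hva', hwb, hwb'⟩ := h1
  obtain ⟨a', b', hab', hwa, hwa', hvb, hvb'⟩ := h2
  have e1 : a = b' := first_unique hva hva' hvb hvb'
  have e2 : b = a' := first_unique hwb hwb' hwa hwa'
  omega

lemma inputs_precede {S : Set (Fin m → V)} {C : Set (Fin m)} {W : Fin m → Set (Fin m)}
    (hLCF2 : ∀ i ∈ C, ∀ t ∈ C, ∀ x ∈ S, ∀ y ∈ S,
      x i = y t → x '' (W i) = y '' (W t))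
    {t : Fin m} (ht : t ∈ C) {y : Fin m → V} (hy : y ∈ S)
    (hv : y t ∈ SInf S C W) {j : Fin m} (hj : j ∈ W t) :
    precS S C W (y j) (y t) := by
  classical
  have hv' : ∃ n, y t ∈ Stage S C W n := Set.mem_iUnion.mp hv
  set b := Nat.find hv' with hb
  have hmem : y t ∈ Stage S C W b := Nat.find_spec hv'
  have hmin : ∀ k < b, y t ∉ Stage S C W k := fun k hk => Nat.find_min hv' hk
  have hb0 : b ≠ 0 := by
    intro h0
    rw [h0] at hmem
    exact hmem ⟨t, ht, y, hy, rfl⟩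
  obtain ⟨b', heq⟩ : ∃ b'', b = b'' + 1 := ⟨b - 1, by omega⟩
  rw [heq] at hmem hmin
  have : y t ∈ Stage S C W b' ∪
      {v | ∃ i ∈ C, ∃ x ∈ S, x i = v ∧ ∀ j ∈ W i, x j ∈ Stage S C W b'} := hmem
  rcases this with h | ⟨t', ht', z, hz, hzt, hall⟩
  · exact absurd h (hmin b' (Nat.lt_succ_self b'))
  · have himg : y '' (W t) = z '' (W t') := hLCF2 t ht t' ht' y hy z hz hzt.symm
    have : y j ∈ z '' (W t') := himg ▸ Set.mem_image_of_mem y hj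
    obtain ⟨j', hj', hjj'⟩ := this
    have hyj : y j ∈ Stage S C W b' := hjj' ▸ hall j' hj'
    have hyj' : ∃ n, y j ∈ Stage S C W n := ⟨b', hyj⟩
    refine ⟨Nat.find hyj', b' + 1, ?_, Nat.find_spec hyj',
      fun k hk => Nat.find_min hyj' hk, hmem, hmin⟩
    have : Nat.find hyj' ≤ b' := Nat.find_min' hyj' hyj
    omega

lemma no_composing_D {S : Set (Fin m → V)} {C D : Set (Fin m)} {W : Fin m → Set (Fin m)}
    (hLCF1 : ∀ i ∈ D, ∃ h ∈ C, h ∈ W i ∧ i ∈ W h)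
    (hLCF2 : ∀ i ∈ C, ∀ t ∈ C, ∀ x ∈ S, ∀ y ∈ S,
      x i = y t → x '' (W i) = y '' (W t))
    {t : Fin m} (ht : t ∈ D) {y : Fin m → V} (hy : y ∈ S)
    (hall : ∀ u ∈ {u | ∃ j ∈ W t, y j = u}, precS S C W u (y t)) : False := by
  obtain ⟨h', hh'C, hh'W, htW⟩ := hLCF1 t ht
  have hpre : precS S C W (y h') (y t) := hall (y h') ⟨h', hh'W, rfl⟩
  have hyh' : y h' ∈ SInf S C W := by
    obtain ⟨a, b, _, hva, _, _, _⟩ := hpre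
    exact Set.mem_iUnion.mpr ⟨a, hva⟩
  exact precS_asymm hpre (inputs_precede hLCF2 hh'C hy hyh' htW)

theorem decomposing_characterization
    (S : Set (Fin m → V)) (C D : Set (Fin m)) (W : Fin m → Set (Fin m))
    (hLCF1 : ∀ i ∈ D, ∃ h ∈ C, h ∈ W i ∧ i ∈ W h)
    (hLCF2 : ∀ i ∈ C, ∀ t ∈ C, ∀ x ∈ S, ∀ y ∈ S,
      x i = y t → x '' (W i) = y '' (W t))
    (hCD : Disjoint C D)
    (i : Fin m) (hi : i ∈ C ∪ D) (x : Fin m → V) (hx : x ∈ S)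
    (hxi : x i ∈ SInf S C W) (hW : ∀ j ∈ W i, x j ∈ SInf S C W) :
    (decomposingRule S C D W {u | ∃ j ∈ W i, x j = u} (x i) ↔ i ∈ D) ∧
    (i ∈ D → ∃ h, h ∈ C ∧ h ∈ W i ∧ i ∈ W h ∧ controls S C D W (x h) (x i)) := by
  have key : i ∈ D → ∃ h, h ∈ C ∧ h ∈ W i ∧ i ∈ W h ∧ controls S C D W (x h) (x i) := by
    intro hiD
    obtain ⟨h, hhC, hhWi, hiWh⟩ := hLCF1 i hiD
    have hxh : x h ∈ SInf S C W := hW h hhWi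
    have hpre : precS S C W (x i) (x h) := inputs_precede hLCF2 hhC hx hxh hiWh
    refine ⟨h, hhC, hhWi, hiWh, hpre, ?_⟩
    rintro X' ⟨t, htCD, y, hy, hvt, rfl⟩ hall
    rcases htCD with htC | htD
    · have himg : x '' (W h) = y '' (W t) := hLCF2 h hhC t htC x hx y hy hvt
      have : x i ∈ y '' (W t) := himg ▸ Set.mem_image_of_mem x hiWh
      obtain ⟨j, hj, hje⟩ := this
      exact ⟨j, hj, hje⟩
    · exact absurd (hvt ▸ hall) (fun hc => no_composing_D hLCF1 hLCF2 htD hy hc)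
  refine ⟨⟨?_, ?_⟩, key⟩
  · intro hdec
    rcases hi with hiC | hiD
    · exfalso
      obtain ⟨v, ⟨j, hj, rfl⟩, hpre, _⟩ := hdec
      exact precS_asymm hpre (inputs_precede hLCF2 hiC hx hxi hj)
    · exact hiD
  · intro hiD
    obtain ⟨h, hhC, hhWi, hiWh, hpre, hctl⟩ := key hiD
    exact ⟨x h, ⟨h, hhWi, rfl⟩, hpre, hctl⟩
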